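/- arXiv:1903.06825 — 3 statements merged into one kernel-verified Lean document; each statement's English description precedes it below -/
import Mathlib

section
/- Let G be a finite abelian group and let n be a natural number such that every multiset of elements of G of cardinality greater than n contains a nonempty submultiset whose product is the identity (for example, n = n(G)). Let r and t be integers with r > t > n. Then for every function a : {1,…,r} → G, the number of subsets S ⊆ {1,…,r} with t − n ≤ |S| ≤ t and ∏_{i∈S} a(i) = 1 is at least (r choose t)/(r choose n). -/
open Finset

private lemma multiset_pullback_map {α β : Type*} [DecidableEq α] [DecidableEq β] (f : α → β) :
    ∀ (M : Multiset β) (s : Multiset α), M ≤ s.map f → ∃ u ≤ s, u.map f = M := by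
  intro M
  induction M using Multiset.induction_on with
  | empty => exact fun s _ => ⟨0, Multiset.zero_le _, rfl⟩
  | cons b M' ih =>
    intro s h
    have hb : b ∈ s.map f := Multiset.mem_of_le h (Multiset.mem_cons_self _ _)
    obtain ⟨x, hx, rfl⟩ := Multiset.mem_map.mp hb
    have hM' : M' ≤ (s.map f).erase (f x) := by
      have := Multiset.erase_le_erase (f x) h
      simpa using this
    rw [← Multiset.map_erase_of_mem f s hx] at hM'
    obtain ⟨u, hu, hmap⟩ := ih (s.erase x) hM'
    refine ⟨x ::ₘ u, ?_, by simp [hmap]⟩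
    calc x ::ₘ u ≤ x ::ₘ s.erase x := Multiset.cons_le_cons x hu
      _ = s := Multiset.cons_erase hx

private lemma exists_good_subset {G : Type*} [CommGroup G] (n : ℕ)
    (hn : ∀ S : Multiset G, n < Multiset.card S →
      ∃ T : Multiset G, T ≤ S ∧ T ≠ 0 ∧ T.prod = 1)
    {ι : Type*} [DecidableEq ι] [DecidableEq G] (a : ι → G) :
    ∀ T : Finset ι, ∃ S ⊆ T, ∏ i ∈ S, a i = 1 ∧ T.card ≤ S.card + n := by
  intro T
  induction T using Finset.strongInduction with
  | _ T ih =>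
    by_cases hT : T.card ≤ n
    · exact ⟨∅, empty_subset _, Finset.prod_empty, by simpa using hT⟩
    · push_neg at hT
      obtain ⟨M, hMle, hM0, hMprod⟩ := hn (T.val.map a) (by simpa using hT)
      obtain ⟨u, hu, rfl⟩ := multiset_pullback_map a M T.val hMle
      set S₀ : Finset ι := ⟨u, Multiset.nodup_of_le hu T.nodup⟩ with hS₀
      have hS₀sub : S₀ ⊆ T := fun x hx => Multiset.mem_of_le hu hx
      have hS₀ne : S₀.Nonempty := by
        rw [Finset.nonempty_iff_ne_empty]
        intro hcon
        apply hM0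
        have : u = 0 := congrArg Finset.val hcon
        simp [this]
      have hprod₀ : ∏ i ∈ S₀, a i = 1 := hMprod
      obtain ⟨S₁, hS₁sub, hS₁prod, hS₁card⟩ :=
        ih (T \ S₀) (Finset.sdiff_ssubset hS₀sub hS₀ne)
      have hdisj : Disjoint S₀ S₁ :=
        Finset.disjoint_left.mpr fun x hx hx' => (Finset.mem_sdiff.mp (hS₁sub hx')).2 hx
      refine ⟨S₀ ∪ S₁, Finset.union_subset hS₀sub (hS₁sub.trans (Finset.sdiff_subset)), ?_, ?_⟩
      · rw [Finset.prod_union hdisj, hprod₀, hS₁prod, one_mul]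
      · rw [Finset.card_union_of_disjoint hdisj]
        have hcd : (T \ S₀).card = T.card - S₀.card := Finset.card_sdiff_of_subset hS₀sub
        have hle : S₀.card ≤ T.card := Finset.card_le_card hS₀sub
        omega

private lemma choose_le_add_choose (m k d : ℕ) : m.choose k ≤ (m + d).choose (k + d) := by
  induction d with
  | zero => exact le_refl _
  | succ d ih =>
    calc m.choose k ≤ (m + d).choose (k + d) := ih
      _ ≤ (m + d).choose (k + d) + (m + d).choose (k + d + 1) := Nat.le_add_right _ _
      _ = (m + d + 1).choose (k + d + 1) := (Nat.choose_succ_succ _ _).symm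

open Finset in
/-- If every multiset of more than `n` elements of the finite abelian group `G` has a
nonempty submultiset with product the identity, and `r > t > n`, then any sequence of `r`
elements of `G` contains at least `(r choose t) / (r choose n)` distinct subsequences, of
length between `t - n` and `t`, whose product is the identity. -/
theorem many_subsequences_with_identity_product (G : Type*) [CommGroup G] [Fintype G]
    [DecidableEq G] (n : ℕ)
    (hn : ∀ S : Multiset G, n < Multiset.card S →
      ∃ T : Multiset G, T ≤ S ∧ T ≠ 0 ∧ T.prod = 1)
    (r t : ℕ) (htr : t < r) (hnt : n < t) (a : Fin r → G) :
    ((r.choose t : ℝ) / (r.choose n : ℝ)) ≤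
      ((Finset.univ.filter fun S : Finset (Fin r) =>
        t - n ≤ S.card ∧ S.card ≤ t ∧ ∏ i ∈ S, a i = 1).card : ℝ) := by
  set 𝒢 : Finset (Finset (Fin r)) := Finset.univ.filter fun S : Finset (Fin r) =>
        t - n ≤ S.card ∧ S.card ≤ t ∧ ∏ i ∈ S, a i = 1 with h𝒢
  -- every t-subset contains a good subset
  have hcover : (Finset.univ : Finset (Fin r)).powersetCard t ⊆
      𝒢.biUnion (fun S => ((Finset.univ : Finset (Fin r)).powersetCard t).filter (S ⊆ ·)) := by
    intro T hT
    rw [Finset.mem_powersetCard] at hT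
    obtain ⟨hTsub, hTcard⟩ := hT
    obtain ⟨S, hSsub, hSprod, hScard⟩ := exists_good_subset n hn a T
    have hSle : S.card ≤ t := hTcard ▸ Finset.card_le_card hSsub
    rw [Finset.mem_biUnion]
    refine ⟨S, ?_, ?_⟩
    · rw [h𝒢, Finset.mem_filter]
      exact ⟨Finset.mem_univ _, by omega, hSle, hSprod⟩
    · rw [Finset.mem_filter, Finset.mem_powersetCard]
      exact ⟨⟨hTsub, hTcard⟩, hSsub⟩
  -- for each good S, the number of t-supersets is at most C(r,n)
  have hbound : ∀ S ∈ 𝒢,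
      (((Finset.univ : Finset (Fin r)).powersetCard t).filter (S ⊆ ·)).card ≤ r.choose n := by
    intro S hS
    rw [h𝒢, Finset.mem_filter] at hS
    obtain ⟨-, hS1, hS2, -⟩ := hS
    have hinj : (((Finset.univ : Finset (Fin r)).powersetCard t).filter (S ⊆ ·)).card ≤
        ((Finset.univ \ S).powersetCard (t - S.card)).card := by
      apply Finset.card_le_card_of_injOn (fun T => T \ S)
      · intro T hT
        rw [Finset.mem_coe, Finset.mem_filter, Finset.mem_powersetCard] at hT
        obtain ⟨⟨-, hTcard⟩, hST⟩ := hT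
        rw [Finset.mem_coe, Finset.mem_powersetCard]
        exact ⟨Finset.sdiff_subset_sdiff (Finset.subset_univ T) (le_refl S),
          by rw [Finset.card_sdiff_of_subset hST, hTcard]⟩
      · intro T₁ h₁ T₂ h₂ heq
        rw [Finset.coe_filter] at h₁ h₂
        obtain ⟨-, hST₁⟩ := h₁
        obtain ⟨-, hST₂⟩ := h₂
        simp only at heq
        have : T₁ \ S ∪ S = T₂ \ S ∪ S := by rw [heq]
        rwa [Finset.sdiff_union_of_subset hST₁, Finset.sdiff_union_of_subset hST₂] at this
    have hcardc : ((Finset.univ : Finset (Fin r)) \ S).card = r - S.card := by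
      rw [Finset.card_sdiff_of_subset (Finset.subset_univ S)]
      simp
    rw [Finset.card_powersetCard, hcardc] at hinj
    refine hinj.trans ?_
    calc (r - S.card).choose (t - S.card)
        ≤ (r - S.card + (n - (t - S.card))).choose (t - S.card + (n - (t - S.card))) :=
          choose_le_add_choose _ _ _
      _ ≤ r.choose n := by
          have h1 : t - S.card + (n - (t - S.card)) = n := by omega
          have h2 : r - S.card + (n - (t - S.card)) ≤ r := by omega
          rw [h1]
          exact Nat.choose_le_choose n h2
  -- double counting
  have hcount : r.choose t ≤ 𝒢.card * r.choose n := by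
    calc r.choose t = ((Finset.univ : Finset (Fin r)).powersetCard t).card := by
          rw [Finset.card_powersetCard]; simp
      _ ≤ (𝒢.biUnion (fun S =>
            ((Finset.univ : Finset (Fin r)).powersetCard t).filter (S ⊆ ·))).card :=
          Finset.card_le_card hcover
      _ ≤ ∑ S ∈ 𝒢, (((Finset.univ : Finset (Fin r)).powersetCard t).filter (S ⊆ ·)).card :=
          Finset.card_biUnion_le
      _ ≤ ∑ _S ∈ 𝒢, r.choose n := Finset.sum_le_sum hbound
      _ = 𝒢.card * r.choose n := by rw [Finset.sum_const, smul_eq_mul]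
  have hpos : (0 : ℝ) < (r.choose n : ℝ) := by
    exact_mod_cast Nat.choose_pos (by omega)
  rw [div_le_iff₀ hpos]
  exact_mod_cast hcount
end

section
/- Let k and L be positive integers and let S be a finite set of primes with |S| ≥ 2 such that every p ∈ S satisfies p = d·k + 1 for some divisor d of L. If N = ∏_{p ∈ S} p satisfies N ≡ 1 (mod k·L), then N is a Carmichael number. -/
/-- A Carmichael number: a composite natural number `n > 1` such that
`a ^ (n - 1) ≡ 1 (mod n)` for every integer `a` coprime to `n`. -/
def IsCarmichael (n : ℕ) : Prop :=
  1 < n ∧ ¬ n.Prime ∧ ∀ a : ℤ, IsCoprime a (n : ℤ) → a ^ (n - 1) ≡ 1 [ZMOD (n : ℤ)]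

/-- If `S` is a set of at least two primes, each of the form `d k + 1` with `d ∣ L`, and
the product `N` of the primes in `S` satisfies `N ≡ 1 (mod k L)`, then `N` is a
Carmichael number. -/
theorem product_is_carmichael (k L : ℕ) (hk : 0 < k) (hL : 0 < L)
    (S : Finset ℕ) (hcard : 2 ≤ S.card) (hprime : ∀ p ∈ S, p.Prime)
    (hform : ∀ p ∈ S, ∃ d : ℕ, d ∣ L ∧ p = d * k + 1)
    (N : ℕ) (hN : N = ∏ p ∈ S, p) (hmod : N ≡ 1 [MOD k * L]) :
    IsCarmichael N := by
  classical
  obtain ⟨p, hp, q, hq, hpq⟩ := Finset.one_lt_card.mp hcard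
  have hdvd : ∀ r ∈ S, r ∣ N := fun r hr => hN ▸ Finset.dvd_prod_of_mem _ hr
  have hNpos : 0 < N := by
    rw [hN]
    exact Finset.prod_pos fun r hr => (hprime r hr).pos
  have hN1 : 1 < N :=
    lt_of_lt_of_le (hprime p hp).one_lt (Nat.le_of_dvd hNpos (hdvd p hp))
  have hkLd : k * L ∣ N - 1 := (Nat.modEq_iff_dvd' hN1.le).mp hmod.symm
  -- each r - 1 divides N - 1
  have hrd : ∀ r ∈ S, (r - 1) ∣ (N - 1) := by
    intro r hr
    obtain ⟨d, hdL, hrdk⟩ := hform r hr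
    have h1 : r - 1 = d * k := by omega
    have h2 : d * k ∣ k * L := by
      rw [Nat.mul_comm k L]; exact Nat.mul_dvd_mul_right hdL k
    rw [h1]
    exact h2.trans hkLd
  refine ⟨hN1, ?_, ?_⟩
  · intro hNp
    have hpN := (Nat.prime_dvd_prime_iff_eq (hprime p hp) hNp).mp (hdvd p hp)
    have hqN := (Nat.prime_dvd_prime_iff_eq (hprime q hq) hNp).mp (hdvd q hq)
    exact hpq (hpN.trans hqN.symm)
  · intro a ha
    have key : ∀ r ∈ S, (r : ℤ) ∣ a ^ (N - 1) - 1 := by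
      intro r hr
      haveI : Fact r.Prime := ⟨hprime r hr⟩
      have har : IsCoprime a ((r : ℕ) : ℤ) :=
        ha.of_isCoprime_of_dvd_right (Int.natCast_dvd_natCast.mpr (hdvd r hr))
      have haz : (a : ZMod r) ≠ 0 := by
        intro h
        have hra : (r : ℤ) ∣ a := (ZMod.intCast_zmod_eq_zero_iff_dvd a r).mp h
        have hcc : IsCoprime ((r : ℕ) : ℤ) ((r : ℕ) : ℤ) :=
          har.of_isCoprime_of_dvd_left hra
        have hg := Int.isCoprime_iff_gcd_eq_one.mp hcc
        simp [Int.gcd_natCast_natCast, Nat.gcd_self] at hg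
        exact (hprime r hr).one_lt.ne' hg
      obtain ⟨m, hm⟩ := hrd r hr
      have hfer : ((a : ZMod r)) ^ (N - 1) = 1 := by
        rw [hm, pow_mul, ZMod.pow_card_sub_one_eq_one haz, one_pow]
      have hz : ((a ^ (N - 1) - 1 : ℤ) : ZMod r) = 0 := by
        push_cast
        rw [hfer, sub_self]
      exact (ZMod.intCast_zmod_eq_zero_iff_dvd _ r).mp hz
    have hcop : (↑S : Set ℕ).Pairwise (Function.onFun IsCoprime fun r => (r : ℤ)) := by
      intro x hx y hy hxy
      exact Int.isCoprime_iff_gcd_eq_one.mpr (by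
        simpa [Int.gcd_natCast_natCast] using
          (Nat.coprime_primes (hprime x hx) (hprime y hy)).mpr hxy)
    have hprod : (∏ r ∈ S, (r : ℤ)) ∣ a ^ (N - 1) - 1 :=
      Finset.prod_dvd_of_coprime hcop key
    have hcast : (N : ℤ) = ∏ r ∈ S, (r : ℤ) := by rw [hN]; push_cast; rfl
    have hNdvd : (N : ℤ) ∣ a ^ (N - 1) - 1 := (dvd_of_eq hcast).trans hprod
    exact Int.ModEq.symm (Int.modEq_iff_dvd.mpr hNdvd)
end

section
/- Let y ≥ 2 be a real number and let L be a squarefree positive integer such that every prime q dividing L satisfies q ≤ y³ and q − 1 has no prime factor exceeding y. Then the exponent λ(L) of the multiplicative group of units (ℤ/Lℤ)* satisfies λ(L) ≤ y^{3·π(y)}. -/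
/-- `primePi y` is the number of primes `p ≤ y`. -/
noncomputable def primePi (y : ℝ) : ℕ := {p : ℕ | p.Prime ∧ (p : ℝ) ≤ y}.ncard

/-- If `y ≥ 2` and `L` is a squarefree positive integer all of whose prime factors `q`
satisfy `q ≤ y ^ 3` and `q - 1` is free of prime factors exceeding `y`, then the
exponent `λ(L)` of `(ℤ/Lℤ)*` is at most `y ^ (3 π(y))`. -/
theorem carmichael_lambda_bound (y : ℝ) (hy : 2 ≤ y) (L : ℕ) (hL : 0 < L)
    (hsq : Squarefree L)
    (hsize : ∀ q : ℕ, q.Prime → q ∣ L → (q : ℝ) ≤ y ^ 3)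
    (hsmooth : ∀ q : ℕ, q.Prime → q ∣ L →
      ∀ p : ℕ, p.Prime → p ∣ (q - 1) → (p : ℝ) ≤ y) :
    (Monoid.exponent (ZMod L)ˣ : ℝ) ≤ y ^ (3 * primePi y) := by
  have hy0 : (0:ℝ) < y := lt_of_lt_of_le two_pos hy
  set P : Finset ℕ := Nat.primesBelow (⌊y⌋₊ + 1) with hP
  have hPmem : ∀ p : ℕ, p ∈ P ↔ p.Prime ∧ (p:ℝ) ≤ y := by
    intro p
    rw [hP, Nat.mem_primesBelow, Nat.lt_succ_iff, and_comm,
      Nat.le_floor_iff hy0.le]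
  have hpi : primePi y = P.card := by
    rw [primePi]
    have : {p : ℕ | p.Prime ∧ (p : ℝ) ≤ y} = ↑P := by
      ext p; simp [hPmem p]
    rw [this, Set.ncard_coe_finset]
  set n3 : ℕ := ⌊y^3⌋₊ with hn3
  have hy3 : (8:ℝ) ≤ y^3 := by
    calc (8:ℝ) = 2^3 := by norm_num
      _ ≤ y^3 := pow_le_pow_left₀ (by norm_num) hy 3
  have hn3pos : 0 < n3 := by
    rw [hn3]; exact Nat.floor_pos.2 (by linarith)
  set K : ℕ := ∏ p ∈ P, p ^ Nat.log p n3 with hK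
  have hKpos : 0 < K := Finset.prod_pos
    (fun p hp => pow_pos ((hPmem p).1 hp).1.pos _)
  -- each q-1 divides K
  have hdvdK : ∀ q : ℕ, q.Prime → q ∣ L → (q-1) ∣ K := by
    intro q hq hqL
    have hq2 := hq.two_le
    have hq1 : q - 1 ≠ 0 := by omega
    have hq1n3 : q - 1 ≤ n3 := by
      apply Nat.le_floor
      calc ((q-1:ℕ):ℝ) ≤ (q:ℝ) := by exact_mod_cast Nat.sub_le q 1
        _ ≤ y^3 := hsize q hq hqL
    have h1 : q - 1 ∣ ∏ p ∈ (q-1).primeFactors, p ^ Nat.log p n3 := by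
      conv_lhs => rw [← Nat.factorization_prod_pow_eq_self hq1]
      rw [Nat.factorization_prod_pow_eq_self hq1]
      nth_rewrite 1 [← Nat.factorization_prod_pow_eq_self hq1]
      rw [Nat.prod_factorization_eq_prod_primeFactors]
      apply Finset.prod_dvd_prod_of_dvd
      intro p hp
      have hpp : p.Prime := Nat.prime_of_mem_primeFactors hp
      apply pow_dvd_pow
      rw [Nat.le_log_iff_pow_le hpp.one_lt hn3pos.ne']
      exact le_trans (Nat.le_of_dvd (Nat.pos_of_ne_zero hq1)
        (Nat.ordProj_dvd _ _)) hq1n3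
    refine h1.trans (Finset.prod_dvd_prod_of_subset _ _ _ ?_)
    intro p hp
    have hpp : p.Prime := Nat.prime_of_mem_primeFactors hp
    exact (hPmem p).2 ⟨hpp, hsmooth q hq hqL p hpp (Nat.dvd_of_mem_primeFactors hp)⟩
  -- exponent divides K
  haveI : NeZero L := ⟨hL.ne'⟩
  have hexp : Monoid.exponent (ZMod L)ˣ ∣ K := by
    apply Monoid.exponent_dvd_of_forall_pow_eq_one
    intro a
    rcases eq_or_lt_of_le (show 1 ≤ L from hL) with h1 | hL2
    · have : Subsingleton (ZMod L)ˣ := by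
        rw [← h1]; infer_instance
      exact Subsingleton.elim _ _
    haveI : Fact (1 < L) := ⟨hL2⟩
    set v : ℕ := (a : ZMod L).val with hv
    have hvcast : ((v : ℕ) : ZMod L) = (a : ZMod L) := by
      rw [hv, ZMod.natCast_val, ZMod.cast_id]
    have hvpos : 0 < v := by
      rcases Nat.eq_zero_or_pos v with h0 | h
      · exfalso
        apply a.ne_zero
        rw [← hvcast, h0, Nat.cast_zero]
      · exact h
    have hvK : 1 ≤ v ^ K := Nat.one_le_pow _ _ hvpos
    -- each prime q | L divides v^K - 1
    have hq : ∀ q ∈ L.primeFactors, q ∣ v ^ K - 1 := by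
      intro q hqmem
      have hqp : q.Prime := Nat.prime_of_mem_primeFactors hqmem
      have hqL : q ∣ L := Nat.dvd_of_mem_primeFactors hqmem
      haveI : Fact q.Prime := ⟨hqp⟩
      set f : ZMod L →+* ZMod q := ZMod.castHom hqL (ZMod q) with hf
      have hu : IsUnit (f (a : ZMod L)) := (Units.isUnit a).map f
      have hne : f (a : ZMod L) ≠ 0 := hu.ne_zero
      have hpow : (f (a : ZMod L)) ^ K = 1 := by
        obtain ⟨c, hc⟩ := hdvdK q hqp hqL
        rw [hc, pow_mul, ZMod.pow_card_sub_one_eq_one hne, one_pow]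
      have : ((v ^ K : ℕ) : ZMod q) = ((1 : ℕ) : ZMod q) := by
        push_cast
        rw [← map_natCast f v, hvcast, hpow]
      rw [ZMod.natCast_eq_natCast_iff] at this
      exact (Nat.modEq_iff_dvd' hvK).1 this.symm
    have hLdvd : L ∣ v ^ K - 1 := by
      rw [← Nat.prod_primeFactors_of_squarefree hsq]
      exact Finset.prod_primes_dvd _
        (fun p hp => (Nat.prime_of_mem_primeFactors hp).prime) hq
    have hmod : ((v ^ K : ℕ) : ZMod L) = ((1 : ℕ) : ZMod L) := by
      rw [ZMod.natCast_eq_natCast_iff]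
      exact ((Nat.modEq_iff_dvd' hvK).2 hLdvd).symm
    ext
    push_cast
    rw [← hvcast]
    push_cast at hmod ⊢
    exact hmod
  -- conclude
  have hexpK : Monoid.exponent (ZMod L)ˣ ≤ K := Nat.le_of_dvd hKpos hexp
  calc (Monoid.exponent (ZMod L)ˣ : ℝ) ≤ (K : ℝ) := by exact_mod_cast hexpK
    _ ≤ ∏ p ∈ P, y ^ 3 := by
        rw [hK]
        push_cast
        apply Finset.prod_le_prod
        · intro p hp; positivity
        · intro p hp
          calc ((p:ℝ) ^ Nat.log p n3) ≤ (n3 : ℝ) := by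
                exact_mod_cast Nat.pow_log_le_self p hn3pos.ne'
            _ ≤ y ^ 3 := Nat.floor_le (by linarith)
    _ = (y ^ 3) ^ P.card := Finset.prod_const _
    _ = y ^ (3 * primePi y) := by rw [hpi, ← pow_mul]
end
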